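/- Suppose the transition model p is known only at state-action-stage triples in the expert's support Z^{p,π^E}, and the deterministic expert policy π^E is known on its support S^{p,π^E}. If a reward r belongs to the feasible set R_{p',π^E} for every transition model p' agreeing with p on Z^{p,π^E}, then for every (s,h) ∈ S^{p,π^E} and every action a: r_h(s, π^E_h(s)) ≥ r_h(s, a). -/

import Mathlib

open Finset

/-- `QstarAux p r t h s a`: optimal `Q`-value at stage `h`, state `s`, action `a`,
with `t` further stages remaining after stage `h`. -/
noncomputable def QstarAux {S A : Type*} [Fintype S] [Fintype A] [Nonempty A]
    (p : ℕ → S → A → S → ℝ) (r : ℕ → S → A → ℝ) : ℕ → ℕ → S → A → ℝ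
  | 0, h, s, a => r h s a
  | t + 1, h, s, a =>
      r h s a + ∑ s' : S, p h s a s' *
        (univ.sup' univ_nonempty fun a' => QstarAux p r t (h + 1) s' a')

/-- The optimal Q-function `Q*_h` over horizon `H` (stages `0, …, H−1`). -/
noncomputable def Qstar {S A : Type*} [Fintype S] [Fintype A] [Nonempty A] (H : ℕ)
    (p : ℕ → S → A → S → ℝ) (r : ℕ → S → A → ℝ) (h : ℕ) : S → A → ℝ :=
  QstarAux p r (H - 1 - h) h

/-- The stochastic policy induced by a deterministic policy. -/
noncomputable def detPol {S A : Type*} [DecidableEq A] (πE : ℕ → S → A) :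
    ℕ → S → A → ℝ :=
  fun h s a => if a = πE h s then 1 else 0

/-- State visitation distribution `ρ^{p,π}_h(s)` from initial distribution `μ0`. -/
noncomputable def visit {S A : Type*} [Fintype S] [Fintype A] (μ0 : S → ℝ)
    (p : ℕ → S → A → S → ℝ) (π : ℕ → S → A → ℝ) : ℕ → S → ℝ
  | 0, s => μ0 s
  | h + 1, s' => ∑ s : S, ∑ a : A, visit μ0 p π h s * π h s a * p h s a s'

/-- Greedy rewards (Proposition on the bitter lesson): if a reward `r` belongs to
the feasible set `R_{p',π^E}` for *every* transition model `p'` agreeing with `p`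
on the expert's support `Z^{p,π^E}` (i.e. at triples `(s, π^E_h(s), h)` with
`ρ^{p,π^E}_h(s) > 0`), then on the expert's support the reward is greedy with
respect to the expert: `r_h(s, π^E_h(s)) ≥ r_h(s,a)` for every action `a`. -/
theorem stmt13 {S A : Type*} [Fintype S] [Fintype A] [Nonempty A] [DecidableEq A]
    (H : ℕ) (hH : 1 ≤ H) (hA : 2 ≤ Fintype.card A)
    (μ0 : S → ℝ) (hμ0 : (∀ s, 0 ≤ μ0 s) ∧ ∑ s : S, μ0 s = 1)
    (p : ℕ → S → A → S → ℝ)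
    (hp : ∀ h s a, (∀ s', 0 ≤ p h s a s') ∧ ∑ s' : S, p h s a s' = 1)
    (πE : ℕ → S → A) (r : ℕ → S → A → ℝ)
    (hfeas : ∀ p' : ℕ → S → A → S → ℝ,
      (∀ h s a, (∀ s', 0 ≤ p' h s a s') ∧ ∑ s' : S, p' h s a s' = 1) →
      (∀ h < H, ∀ s, 0 < visit μ0 p (detPol πE) h s →
        p' h s (πE h s) = p h s (πE h s)) →
      (∀ h < H, ∀ s, 0 < visit μ0 p' (detPol πE) h s → ∀ a : A,
        Qstar H p' r h s a ≤ Qstar H p' r h s (πE h s))) :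
    ∀ h < H, ∀ s, 0 < visit μ0 p (detPol πE) h s → ∀ a : A,
      r h s a ≤ r h s (πE h s) := by
  intro h hhH s hs a
  -- the adversarial model: every action behaves like the expert's action
  set p' : ℕ → S → A → S → ℝ := fun h s _ s' => p h s (πE h s) s' with hp'def
  have hp' : ∀ h s a, (∀ s', 0 ≤ p' h s a s') ∧ ∑ s' : S, p' h s a s' = 1 :=
    fun h s a => hp h s (πE h s)
  have hagree : ∀ h, h < H → ∀ s, 0 < visit μ0 p (detPol πE) h s →
      p' h s (πE h s) = p h s (πE h s) := fun _ _ _ _ => rfl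
  have hvisit : ∀ h, visit μ0 p' (detPol πE) h = visit μ0 p (detPol πE) h := by
    intro h
    induction h with
    | zero => rfl
    | succ n ih =>
      funext s'
      show (∑ s : S, ∑ a : A, visit μ0 p' (detPol πE) n s * detPol πE n s a * p' n s a s')
        = ∑ s : S, ∑ a : A, visit μ0 p (detPol πE) n s * detPol πE n s a * p n s a s'
      refine Finset.sum_congr rfl fun s _ => Finset.sum_congr rfl fun b _ => ?_
      rw [ih]
      by_cases hb : b = πE n s
      · subst hb; rfl
      · simp [detPol, hb]
  -- continuation value under p' is independent of the action
  have hdiff : ∀ t h s (a b : A),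
      QstarAux p' r t h s a - r h s a = QstarAux p' r t h s b - r h s b := by
    intro t h s a b
    cases t with
    | zero => simp [QstarAux]
    | succ t =>
      show (r h s a + _) - r h s a = (r h s b + _) - r h s b
      simp only [add_sub_cancel_left]
      rfl
  have key := hfeas p' hp' hagree h hhH s (by rw [hvisit]; exact hs) a
  have heq := hdiff (H - 1 - h) h s a (πE h s)
  unfold Qstar at key
  linarith
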